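/- arXiv:1602.09051 — 2 statements merged into one kernel-verified Lean document; each statement's English description precedes it below -/
import Mathlib

section
/- For a ring R, S = R[[t]], and y a power series with zero constant term, the substitution endomorphism Sub(y) of S is an automorphism if and only if the coefficient of t in y is a unit of R. -/
/-- The `t`-adic topology on the power series ring `R[[t]]`. -/
def psTop (R : Type*) [CommRing R] : TopologicalSpace (PowerSeries R) :=
  TopologicalSpace.generateFrom
    {U | ∃ (f : PowerSeries R) (n : ℕ),
      U = {g : PowerSeries R | ∀ i < n, PowerSeries.coeff i (g - f) = 0}}

noncomputable section

namespace SubAux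

open PowerSeries Finset

variable {R : Type*} [CommRing R]

/-- Basic "open ball" around `f` of radius `n`. -/
def B (f : PowerSeries R) (n : ℕ) : Set (PowerSeries R) :=
  {g : PowerSeries R | ∀ i < n, PowerSeries.coeff i (g - f) = 0}

def gen (R : Type*) [CommRing R] : Set (Set (PowerSeries R)) :=
  {U | ∃ (f : PowerSeries R) (n : ℕ), U = B f n}

lemma psTop_eq : psTop R = TopologicalSpace.generateFrom (gen R) := rfl

lemma self_mem_B (f : PowerSeries R) (n : ℕ) : f ∈ B f n := by
  intro i _; simp [B]

lemma mem_B_iff {f g : PowerSeries R} {n : ℕ} :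
    g ∈ B f n ↔ (X : PowerSeries R) ^ n ∣ g - f := by
  rw [X_pow_dvd_iff]; rfl

lemma B_mono {f : PowerSeries R} {n m : ℕ} (h : n ≤ m) : B f m ⊆ B f n :=
  fun g hg i hi => hg i (lt_of_lt_of_le hi h)

lemma B_open (f : PowerSeries R) (n : ℕ) : @IsOpen _ (psTop R) (B f n) :=
  TopologicalSpace.GenerateOpen.basic _ ⟨f, n, rfl⟩

lemma exists_basic {U : Set (PowerSeries R)} (hU : @IsOpen _ (psTop R) U) :
    ∀ f ∈ U, ∃ n, B f n ⊆ U := by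
  have hU' : TopologicalSpace.GenerateOpen (gen R) U := hU
  clear hU
  induction hU' with
  | basic s hs =>
    obtain ⟨h, n, rfl⟩ := hs
    intro f hf
    refine ⟨n, fun g hg i hi => ?_⟩
    have : PowerSeries.coeff i (g - h) =
        PowerSeries.coeff i (g - f) + PowerSeries.coeff i (f - h) := by
      rw [← map_add, sub_add_sub_cancel]
    rw [this, hg i hi, hf i hi, add_zero]
  | univ => exact fun f _ => ⟨0, fun g _ => trivial⟩
  | inter s t _ _ ihs iht =>
    intro f hf
    obtain ⟨n, hn⟩ := ihs f hf.1
    obtain ⟨m, hm⟩ := iht f hf.2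
    exact ⟨max n m, fun g hg =>
      ⟨hn (B_mono (le_max_left _ _) hg), hm (B_mono (le_max_right _ _) hg)⟩⟩
  | sUnion S _ ih =>
    intro f hf
    obtain ⟨s, hsS, hfs⟩ := hf
    obtain ⟨n, hn⟩ := ih s hsS f hfs
    exact ⟨n, hn.trans (Set.subset_sUnion_of_mem hsS)⟩

end SubAux

namespace SubAux

open PowerSeries Finset

variable {R : Type*} [CommRing R]

/-- Substitution of `Z` into `f`, i.e. `f(Z)`, assuming `Z` has zero constant term. -/
noncomputable def subFun (Z f : PowerSeries R) : PowerSeries R :=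
  PowerSeries.mk fun m => ∑ n ∈ range (m + 1), coeff n f * coeff m (Z ^ n)

lemma coeff_subFun (Z f : PowerSeries R) (m : ℕ) :
    coeff m (subFun Z f) = ∑ n ∈ range (m + 1), coeff n f * coeff m (Z ^ n) :=
  coeff_mk _ _

variable {Z : PowerSeries R}

lemma coeff_pow_eq_zero (hZ : constantCoeff Z = 0) {m n : ℕ} (h : m < n) :
    coeff m (Z ^ n) = 0 :=
  X_pow_dvd_iff.mp (pow_dvd_pow_of_dvd (X_dvd_iff.mpr hZ) n) m h

lemma coeff_aeval (hZ : constantCoeff Z = 0) (p : Polynomial R) (m : ℕ) :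
    coeff m (Polynomial.aeval Z p) = ∑ n ∈ range (m + 1), p.coeff n * coeff m (Z ^ n) := by
  have hN : p.natDegree < max (m + 1) (p.natDegree + 1) :=
    lt_of_lt_of_le (Nat.lt_succ_self _) (le_max_right _ _)
  rw [Polynomial.aeval_eq_sum_range' hN, map_sum]
  simp_rw [LinearMap.map_smul, smul_eq_mul]
  refine (Finset.sum_subset (Finset.range_subset_range.2 (le_max_left _ _)) fun i _ hi => ?_).symm
  have hmi : m < i := by simp only [Finset.mem_range] at hi; omega
  rw [coeff_pow_eq_zero hZ hmi, mul_zero]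

lemma subFun_coe (hZ : constantCoeff Z = 0) (p : Polynomial R) :
    subFun Z (p : PowerSeries R) = Polynomial.aeval Z p := by
  ext m
  rw [coeff_subFun, coeff_aeval hZ]
  exact Finset.sum_congr rfl fun n _ => by rw [Polynomial.coeff_coe]

lemma coeff_subFun_congr {f g : PowerSeries R} {m : ℕ}
    (h : ∀ j ≤ m, coeff j f = coeff j g) :
    coeff m (subFun Z f) = coeff m (subFun Z g) := by
  rw [coeff_subFun, coeff_subFun]
  exact Finset.sum_congr rfl fun n hn => by
    rw [h n (Nat.lt_succ_iff.mp (Finset.mem_range.mp hn))]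

lemma coeff_subFun_trunc (hZ : constantCoeff Z = 0) (f : PowerSeries R) {j m : ℕ}
    (hj : j ≤ m) :
    coeff j (subFun Z f) = coeff j (Polynomial.aeval Z (trunc (m + 1) f)) := by
  rw [← subFun_coe hZ]
  exact coeff_subFun_congr fun i hi => by
    rw [Polynomial.coeff_coe, coeff_trunc, if_pos (by omega)]

lemma X_pow_dvd_subFun_sub_trunc (hZ : constantCoeff Z = 0) (f : PowerSeries R) (m : ℕ) :
    (X : PowerSeries R) ^ (m + 1) ∣
      subFun Z f - Polynomial.aeval Z (trunc (m + 1) f) := by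
  refine X_pow_dvd_iff.mpr fun j hj => ?_
  rw [map_sub, coeff_subFun_trunc hZ f (Nat.lt_succ_iff.mp hj), sub_self]

lemma dvd_mul_sub_mul {n : ℕ} {f f' g g' : PowerSeries R}
    (h1 : (X : PowerSeries R) ^ n ∣ f - f') (h2 : (X : PowerSeries R) ^ n ∣ g - g') :
    (X : PowerSeries R) ^ n ∣ f * g - f' * g' := by
  have : f * g - f' * g' = f * (g - g') + (f - f') * g' := by ring
  rw [this]
  exact dvd_add (Dvd.dvd.mul_left h2 f) (Dvd.dvd.mul_right h1 g')

lemma coeff_eq_of_dvd {f g : PowerSeries R} {m n : ℕ} (h : m < n)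
    (hd : (X : PowerSeries R) ^ n ∣ f - g) : coeff m f = coeff m g := by
  have := X_pow_dvd_iff.mp hd m h
  rw [map_sub, sub_eq_zero] at this
  exact this

lemma subFun_mul (hZ : constantCoeff Z = 0) (f g : PowerSeries R) :
    subFun Z (f * g) = subFun Z f * subFun Z g := by
  ext m
  set P := trunc (m + 1) f with hP
  set Q := trunc (m + 1) g with hQ
  set T := trunc (m + 1) (f * g) with hT
  have hpoly : (Polynomial.X : Polynomial R) ^ (m + 1) ∣ T - P * Q := by
    refine Polynomial.X_pow_dvd_iff.mpr fun d hd => ?_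
    have hd' : d ≤ m := Nat.lt_succ_iff.mp hd
    rw [Polynomial.coeff_sub, hT, coeff_trunc, if_pos hd, Polynomial.coeff_mul,
      PowerSeries.coeff_mul]
    rw [sub_eq_zero]
    refine Finset.sum_congr rfl fun x hx => ?_
    have hxd : x.1 + x.2 = d := Finset.HasAntidiagonal.mem_antidiagonal.mp hx
    rw [hP, hQ, coeff_trunc, coeff_trunc, if_pos (by omega), if_pos (by omega)]
  have h2 : (X : PowerSeries R) ^ (m + 1) ∣
      (Polynomial.aeval Z T : PowerSeries R) - Polynomial.aeval Z (P * Q) := by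
    obtain ⟨D, hD⟩ := hpoly
    rw [← map_sub, hD, map_mul, map_pow, Polynomial.aeval_X]
    exact dvd_mul_of_dvd_left (pow_dvd_pow_of_dvd (X_dvd_iff.mpr hZ) _) _
  have h1 := X_pow_dvd_subFun_sub_trunc hZ (f * g) m
  have h3 : (X : PowerSeries R) ^ (m + 1) ∣
      (Polynomial.aeval Z (P * Q) : PowerSeries R) - subFun Z f * subFun Z g := by
    rw [map_mul]
    exact dvd_mul_sub_mul
      ((dvd_sub_comm).mp (X_pow_dvd_subFun_sub_trunc hZ f m))
      ((dvd_sub_comm).mp (X_pow_dvd_subFun_sub_trunc hZ g m))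
  have : (X : PowerSeries R) ^ (m + 1) ∣ subFun Z (f * g) - subFun Z f * subFun Z g := by
    have e : subFun Z (f * g) - subFun Z f * subFun Z g =
        (subFun Z (f * g) - Polynomial.aeval Z T) +
        ((Polynomial.aeval Z T - Polynomial.aeval Z (P * Q)) +
          (Polynomial.aeval Z (P * Q) - subFun Z f * subFun Z g)) := by ring
    rw [e]
    exact dvd_add h1 (dvd_add h2 h3)
  exact coeff_eq_of_dvd (Nat.lt_succ_self m) this

lemma subFun_add (Z f g : PowerSeries R) :
    subFun Z (f + g) = subFun Z f + subFun Z g := by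
  ext m
  simp only [coeff_subFun, map_add, add_mul, Finset.sum_add_distrib]

lemma subFun_one (Z : PowerSeries R) : subFun Z (1 : PowerSeries R) = 1 := by
  ext m
  rw [coeff_subFun, Finset.sum_eq_single 0]
  · simp
  · intro n _ hn
    rw [coeff_one, if_neg hn, zero_mul]
  · intro h
    exact absurd (Finset.mem_range.mpr (Nat.succ_pos m)) h

lemma subFun_C (Z : PowerSeries R) (r : R) : subFun Z (C r) = C r := by
  ext m
  rw [coeff_subFun, Finset.sum_eq_single 0]
  · simp [coeff_C]
  · intro n _ hn
    rw [coeff_C, if_neg hn, zero_mul]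
  · intro h
    exact absurd (Finset.mem_range.mpr (Nat.succ_pos m)) h

lemma subFun_zero (Z : PowerSeries R) : subFun Z (0 : PowerSeries R) = 0 := by
  ext m
  simp [coeff_subFun]

/-- Substitution as an `R`-algebra homomorphism. -/
noncomputable def subAlgHom (Z : PowerSeries R) (hZ : constantCoeff Z = 0) :
    PowerSeries R →ₐ[R] PowerSeries R where
  toFun := subFun Z
  map_one' := subFun_one Z
  map_mul' := subFun_mul hZ
  map_zero' := subFun_zero Z
  map_add' := subFun_add Z
  commutes' r := by
    show subFun Z (algebraMap R (PowerSeries R) r) = algebraMap R (PowerSeries R) r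
    rw [← C_eq_algebraMap, subFun_C]

@[simp] lemma subAlgHom_apply (hZ : constantCoeff Z = 0) (f : PowerSeries R) :
    subAlgHom Z hZ f = subFun Z f := rfl

lemma subFun_X (hZ : constantCoeff Z = 0) : subFun Z (X : PowerSeries R) = Z := by
  ext m
  rw [coeff_subFun]
  rcases Nat.eq_zero_or_pos m with hm | hm
  · subst hm
    rw [Finset.range_one, Finset.sum_singleton, coeff_X, if_neg (by norm_num), zero_mul,
      coeff_zero_eq_constantCoeff_apply, hZ]
  · rw [Finset.sum_eq_single 1]
    · rw [coeff_X, if_pos rfl, one_mul, pow_one]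
    · intro n _ hn
      rw [coeff_X, if_neg hn, zero_mul]
    · intro h
      exact absurd (Finset.mem_range.mpr (by omega)) h

lemma X_pow_dvd_subFun (hZ : constantCoeff Z = 0) {n : ℕ} {f : PowerSeries R}
    (h : (X : PowerSeries R) ^ n ∣ f) : (X : PowerSeries R) ^ n ∣ subFun Z f := by
  obtain ⟨u, rfl⟩ := h
  have : subFun Z ((X : PowerSeries R) ^ n * u) = Z ^ n * subFun Z u := by
    have := map_mul (subAlgHom Z hZ) ((X : PowerSeries R) ^ n) u
    simpa [map_pow, subFun_X hZ] using this
  rw [this]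
  exact dvd_mul_of_dvd_left (pow_dvd_pow_of_dvd (X_dvd_iff.mpr hZ) n) _

end SubAux
namespace SubAux

open PowerSeries Finset

variable {R : Type*} [CommRing R] {Z : PowerSeries R}

lemma continuous_subAlgHom (Z : PowerSeries R) (hZ : constantCoeff Z = 0) :
    @Continuous _ _ (psTop R) (psTop R) (subAlgHom Z hZ) := by
  letI : TopologicalSpace (PowerSeries R) := psTop R
  refine continuous_generateFrom_iff.mpr ?_
  rintro s ⟨h, m, rfl⟩
  have key : (⇑(subAlgHom Z hZ)) ⁻¹' (B h m) =
      ⋃ a ∈ (⇑(subAlgHom Z hZ)) ⁻¹' (B h m), B a m := by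
    ext b
    constructor
    · intro hb
      exact Set.mem_biUnion hb (self_mem_B b m)
    · rintro ⟨t, ⟨a, rfl⟩, ht⟩
      obtain ⟨t', ⟨ha, rfl⟩, hb⟩ := ht
      intro i hi
      have hba : (X : PowerSeries R) ^ m ∣ subFun Z b - subFun Z a := by
        rw [show subFun Z b - subFun Z a = subFun Z (b - a) from
          (map_sub (subAlgHom Z hZ) b a).symm]
        exact X_pow_dvd_subFun hZ (mem_B_iff.mp hb)
      have e : coeff i (subFun Z b - h) =
          coeff i (subFun Z b - subFun Z a) + coeff i (subFun Z a - h) := by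
        rw [← map_add, sub_add_sub_cancel]
      have h1 : coeff i (subFun Z b - subFun Z a) = 0 := X_pow_dvd_iff.mp hba i hi
      have h2 : coeff i (subFun Z a - h) = 0 := ha i hi
      show coeff i (subFun Z b - h) = 0
      rw [e, h1, h2, add_zero]
  show IsOpen ((⇑(subAlgHom Z hZ)) ⁻¹' (B h m))
  rw [key]
  exact isOpen_biUnion fun a _ => B_open a m

lemma eq_subAlgHom {φ : PowerSeries R →ₐ[R] PowerSeries R}
    (hφ : @Continuous _ _ (psTop R) (psTop R) φ)
    (hZ : constantCoeff Z = 0) (hφX : φ PowerSeries.X = Z) :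
    φ = subAlgHom Z hZ := by
  letI : TopologicalSpace (PowerSeries R) := psTop R
  have hpoly : ∀ p : Polynomial R, φ (p : PowerSeries R) = Polynomial.aeval Z p := by
    intro p
    induction p using Polynomial.induction_on' with
    | add p q hp hq => rw [Polynomial.coe_add, map_add, hp, hq, map_add]
    | monomial n a =>
      have hmono : ((Polynomial.monomial n a : Polynomial R) : PowerSeries R) =
          C a * X ^ n := by
        ext k
        simp [Polynomial.coeff_coe, Polynomial.coeff_monomial, coeff_C_mul, coeff_X_pow,
          PowerSeries.coeff_monomial, eq_comm]
      rw [hmono, map_mul, map_pow, hφX, Polynomial.aeval_monomial]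
      congr 1
      rw [C_eq_algebraMap, AlgHom.commutes]
  apply AlgHom.ext
  intro f
  show φ f = subFun Z f
  apply PowerSeries.ext
  intro m
  -- use continuity at f for the target ball of radius m+1 around φ f
  have hopen : IsOpen ((⇑φ) ⁻¹' (B (φ f) (m + 1))) :=
    (B_open (φ f) (m + 1)).preimage hφ
  have hfmem : f ∈ (⇑φ) ⁻¹' (B (φ f) (m + 1)) := self_mem_B (φ f) (m + 1)
  obtain ⟨n, hn⟩ := exists_basic hopen f hfmem
  set N := max n (m + 1) with hN
  set p := trunc N f with hp
  have hpB : (p : PowerSeries R) ∈ B f n := by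
    intro i hi
    rw [map_sub, Polynomial.coeff_coe, hp, coeff_trunc,
      if_pos (lt_of_lt_of_le hi (le_max_left _ _)), sub_self]
  have hmem := hn hpB
  have hφp : coeff m (φ f) = coeff m (φ (p : PowerSeries R)) := by
    have := hmem m (Nat.lt_succ_self m)
    rw [map_sub, sub_eq_zero] at this
    exact this.symm
  rw [hφp, hpoly p]
  -- now compare with subFun
  have : coeff m (subFun Z f) = coeff m (Polynomial.aeval Z p) := by
    rw [coeff_subFun, coeff_aeval hZ]
    refine Finset.sum_congr rfl fun k hk => ?_
    have hk' : k ≤ m := Nat.lt_succ_iff.mp (Finset.mem_range.mp hk)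
    rw [hp, coeff_trunc, if_pos (by omega : k < N)]
  rw [this]

end SubAux
namespace SubAux

open PowerSeries Finset

variable {R : Type*} [CommRing R]

/-- Coefficients of the compositional inverse of `y`, where `u` is the unit `coeff 1 y`. -/
noncomputable def invCoeff (y : PowerSeries R) (u : Rˣ) : ℕ → R
  | n => (↑(u⁻¹ ^ n) : R) *
      ((if n = 1 then 1 else 0) -
        ∑ k ∈ (range n).attach, invCoeff y u ↑k * coeff n (y ^ (k : ℕ)))
  decreasing_by exact Finset.mem_range.mp k.2

lemma invCoeff_def (y : PowerSeries R) (u : Rˣ) (n : ℕ) :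
    invCoeff y u n = (↑(u⁻¹ ^ n) : R) *
      ((if n = 1 then 1 else 0) - ∑ k ∈ range n, invCoeff y u k * coeff n (y ^ k)) := by
  rw [invCoeff]
  congr 2
  exact Finset.sum_attach (range n) fun k => invCoeff y u k * coeff n (y ^ k)

lemma invCoeff_zero (y : PowerSeries R) (u : Rˣ) : invCoeff y u 0 = 0 := by
  rw [invCoeff_def]; simp

lemma constantCoeff_mk_invCoeff (y : PowerSeries R) (u : Rˣ) :
    constantCoeff (PowerSeries.mk (invCoeff y u)) = 0 := by
  rw [← coeff_zero_eq_constantCoeff_apply, coeff_mk, invCoeff_zero]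

lemma coeff_pow_self {y : PowerSeries R} (hy : constantCoeff y = 0) (n : ℕ) :
    coeff n (y ^ n) = (coeff 1 y) ^ n := by
  obtain ⟨v, hv⟩ := X_dvd_iff.mpr hy
  have h1 : coeff 1 y = constantCoeff v := by
    rw [hv, ← coeff_zero_eq_constantCoeff_apply]
    exact coeff_succ_X_mul 0 v
  calc coeff n (y ^ n) = coeff (0 + n) (X ^ n * v ^ n) := by rw [hv, mul_pow, zero_add]
    _ = coeff 0 (v ^ n) := coeff_X_pow_mul _ _ _
    _ = (coeff 1 y) ^ n := by rw [coeff_zero_eq_constantCoeff_apply, map_pow, h1]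

lemma subFun_mk_invCoeff {y : PowerSeries R} (hy : constantCoeff y = 0) (u : Rˣ)
    (hu : (↑u : R) = coeff 1 y) :
    subFun y (PowerSeries.mk (invCoeff y u)) = X := by
  ext n
  rw [coeff_subFun, Finset.sum_range_succ]
  simp_rw [coeff_mk]
  have hyn : coeff n (y ^ n) = (↑(u ^ n) : R) := by
    rw [coeff_pow_self hy, ← hu, Units.val_pow_eq_pow_val]
  rw [hyn, invCoeff_def, PowerSeries.coeff_X]
  have hab : (↑(u⁻¹ ^ n) : R) * (↑(u ^ n) : R) = 1 := by
    rw [← Units.val_mul, inv_pow, inv_mul_cancel, Units.val_one]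
  set S := ∑ k ∈ range n, invCoeff y u k * coeff n (y ^ k) with hS
  set I := (if n = 1 then (1 : R) else 0) with hI
  linear_combination (I - S) * hab

lemma subFun_injective {y : PowerSeries R} (hy : constantCoeff y = 0)
    (hu : IsUnit (coeff 1 y)) : Function.Injective (subFun y) := by
  have key : ∀ f : PowerSeries R, subFun y f = 0 → f = 0 := by
    intro f hf
    ext n
    induction n using Nat.strong_induction_on with
    | _ n ih =>
      have h0 : coeff n (subFun y f) = 0 := by rw [hf, map_zero]
      rw [coeff_subFun, Finset.sum_range_succ] at h0
      have hz : ∑ k ∈ range n, coeff k f * coeff n (y ^ k) = 0 := by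
        refine Finset.sum_eq_zero fun k hk => ?_
        have := ih k (Finset.mem_range.mp hk)
        rw [map_zero] at this
        rw [this, zero_mul]
      rw [hz, zero_add, coeff_pow_self hy] at h0
      rw [map_zero]
      exact ((hu.pow n).mul_left_eq_zero).mp h0
  intro f g hfg
  have : subFun y (f - g) = 0 := by
    rw [show subFun y (f - g) = subFun y f - subFun y g from
      map_sub (subAlgHom y hy) f g, hfg, sub_self]
  exact sub_eq_zero.mp (key _ this)

end SubAux

open SubAux PowerSeries in
/-- For `y ∈ R[[t]]` with zero constant term, the substitution endomorphism `Sub(y)`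
(the continuous `R`-algebra endomorphism with `t ↦ y`) is an automorphism (i.e. has a
continuous two-sided inverse) if and only if the coefficient of `t` in `y` is a unit. -/
theorem sub_isAut_iff_coeff_one_isUnit (R : Type*) [CommRing R]
    (y : PowerSeries R) (hy : PowerSeries.constantCoeff y = 0)
    (φ : PowerSeries R →ₐ[R] PowerSeries R)
    (hφ : @Continuous _ _ (psTop R) (psTop R) φ) (hφX : φ PowerSeries.X = y) :
    (∃ ψ : PowerSeries R →ₐ[R] PowerSeries R,
        @Continuous _ _ (psTop R) (psTop R) ψ ∧
        φ.comp ψ = AlgHom.id R (PowerSeries R) ∧ ψ.comp φ = AlgHom.id R (PowerSeries R)) ↔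
      IsUnit (PowerSeries.coeff 1 y) := by
  constructor
  · rintro ⟨ψ, -, h1, -⟩
    set z := ψ PowerSeries.X with hzdef
    have hφz : φ z = PowerSeries.X := by
      have := DFunLike.congr_fun h1 (PowerSeries.X : PowerSeries R)
      simpa [AlgHom.comp_apply] using this
    have hC : ∀ r : R, φ (C r) = C r := fun r => by
      rw [C_eq_algebraMap, AlgHom.commutes]
    have hdec := eq_X_mul_shift_add_const z
    have e1 : (PowerSeries.X : PowerSeries R) =
        y * φ (PowerSeries.mk fun p => coeff (p + 1) z) + C (constantCoeff z) := by
      calc (PowerSeries.X : PowerSeries R) = φ z := hφz.symm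
        _ = φ ((PowerSeries.X * PowerSeries.mk fun p => coeff (p + 1) z) +
            C (constantCoeff z)) := by rw [← hdec]
        _ = y * φ (PowerSeries.mk fun p => coeff (p + 1) z) + C (constantCoeff z) := by
            rw [map_add, map_mul, hφX, hC]
    have hz0 : constantCoeff z = 0 := by
      have := congrArg constantCoeff e1
      simp only [map_add, map_mul, hy, zero_mul, constantCoeff_C, constantCoeff_X,
        zero_add] at this
      exact this.symm
    set w : PowerSeries R := PowerSeries.mk fun p => coeff (p + 1) z with hwdef
    have e2 : (PowerSeries.X : PowerSeries R) = y * φ w := by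
      rw [e1, hz0, map_zero, add_zero]
    have hdecw := eq_X_mul_shift_add_const w
    have e3 : (PowerSeries.X : PowerSeries R) =
        y * y * φ (PowerSeries.mk fun p => coeff (p + 1) w) +
          C (constantCoeff w) * y := by
      calc (PowerSeries.X : PowerSeries R) = y * φ w := e2
        _ = y * φ ((PowerSeries.X * PowerSeries.mk fun p => coeff (p + 1) w) +
            C (constantCoeff w)) := by rw [← hdecw]
        _ = y * (y * φ (PowerSeries.mk fun p => coeff (p + 1) w) +
            C (constantCoeff w)) := by rw [map_add, map_mul, hφX, hC]
        _ = _ := by ring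
    have hX2 : (PowerSeries.X : PowerSeries R) ^ 2 ∣
        y * y * φ (PowerSeries.mk fun p => coeff (p + 1) w) := by
      have hXy := X_dvd_iff.mpr hy
      exact Dvd.dvd.mul_right (by rw [sq]; exact mul_dvd_mul hXy hXy) _
    have hc1 : coeff 1 (y * y * φ (PowerSeries.mk fun p => coeff (p + 1) w)) = 0 :=
      X_pow_dvd_iff.mp hX2 1 one_lt_two
    have key := congrArg (coeff 1) e3
    rw [map_add, hc1, zero_add, coeff_C_mul, PowerSeries.coeff_X, if_pos rfl] at key
    exact IsUnit.of_mul_eq_one _ (by rw [mul_comm]; exact key.symm)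
  · intro hu
    obtain ⟨u, hu'⟩ := hu
    have hZ0 := constantCoeff_mk_invCoeff y u
    have hφeq : φ = subAlgHom y hy := eq_subAlgHom hφ hy hφX
    have hsub : subFun y (PowerSeries.mk (invCoeff y u)) = PowerSeries.X :=
      subFun_mk_invCoeff hy u hu'
    set ψ := subAlgHom (PowerSeries.mk (invCoeff y u)) hZ0 with hψdef
    have hψcont := continuous_subAlgHom (PowerSeries.mk (invCoeff y u)) hZ0
    have hXc : constantCoeff (PowerSeries.X : PowerSeries R) = 0 := constantCoeff_X
    have hidcont : @Continuous _ _ (psTop R) (psTop R) (AlgHom.id R (PowerSeries R)) := by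
      letI := psTop R
      exact continuous_id
    have hid : AlgHom.id R (PowerSeries R) = subAlgHom PowerSeries.X hXc :=
      eq_subAlgHom hidcont hXc rfl
    have hcont1 : @Continuous _ _ (psTop R) (psTop R) (φ.comp ψ) := by
      letI := psTop R
      exact hφ.comp hψcont
    have hX1 : (φ.comp ψ) PowerSeries.X = PowerSeries.X := by
      rw [AlgHom.comp_apply, hψdef, subAlgHom_apply, subFun_X hZ0, hφeq, subAlgHom_apply,
        hsub]
    have hco1 : φ.comp ψ = AlgHom.id R (PowerSeries R) :=
      (eq_subAlgHom hcont1 hXc hX1).trans hid.symm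
    refine ⟨ψ, hψcont, hco1, ?_⟩
    -- second composition
    have hinj : Function.Injective (subFun y) :=
      subFun_injective hy (hu' ▸ u.isUnit)
    have hψy : subFun (PowerSeries.mk (invCoeff y u)) y = PowerSeries.X := by
      apply hinj
      have h1' : φ (subFun (PowerSeries.mk (invCoeff y u)) y) = y := by
        have := DFunLike.congr_fun hco1 y
        simpa [AlgHom.comp_apply, hψdef] using this
      rw [hφeq, subAlgHom_apply] at h1'
      rw [h1']
      have h2' : subFun y PowerSeries.X = y := by
        rw [hφeq, subAlgHom_apply] at hφX
        exact hφX
      rw [h2']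
    have hcont2 : @Continuous _ _ (psTop R) (psTop R) (ψ.comp φ) := by
      letI := psTop R
      exact hψcont.comp hφ
    have hX2' : (ψ.comp φ) PowerSeries.X = PowerSeries.X := by
      rw [AlgHom.comp_apply, hφX, hψdef, subAlgHom_apply, hψy]
    exact (eq_subAlgHom hcont2 hXc hX2').trans hid.symm
end
end

section
/- Let p be prime and suppose sequences (a_n)_{n∈Z}, (b_n)_{n∈Z} in Z[1/p]_{≥0} ∪ {+∞} satisfy: a_n = b_n = 0 for n ≤ 0; 0 < a_1, b_1 < +∞; and a_n → ∞, b_n → ∞. Define c = min{ (p^n/(p^n−1)) a_n, (p^n/(p^n−1)) b_n : n ≥ 1 } and c_n = ((p^n−1)/p^n) c. Then a_n ≥ c_n and b_n ≥ c_n for all n ∈ Z; there exist maximal indices l, m with a_l = c_l and b_m = c_m; and l, m ≥ 0 with l + m > 0. -/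
/-- The set of nonnegative elements of `ℤ[1/p]`, viewed inside `ℚ`. -/
def IsPAdicNN (p : ℕ) (q : ℚ) : Prop := 0 ≤ q ∧ ∃ (a : ℤ) (n : ℕ), q = a / p ^ n

private lemma coe_mul_eq_coe' (r x : ℚ) (t : WithTop ℚ) (hr : r ≠ 0)
    (h : (r : WithTop ℚ) * t = (x : WithTop ℚ)) : ∃ q : ℚ, t = (q : WithTop ℚ) ∧ x = r * q := by
  induction t using WithTop.recTopCoe with
  | top =>
      rw [WithTop.mul_top (by exact_mod_cast hr)] at h
      exact absurd h.symm WithTop.coe_ne_top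
  | coe q =>
      refine ⟨q, rfl, ?_⟩
      rw [← WithTop.coe_mul] at h
      exact_mod_cast h.symm

/-- For sequences `(a_n), (b_n)` in `ℤ[1/p]_{≥0} ∪ {+∞}` with `a_n = b_n = 0` for `n ≤ 0`,
`0 < a_1, b_1 < +∞`, and `a_n, b_n → ∞`: setting
`c = min{ (p^n/(p^n−1)) a_n, (p^n/(p^n−1)) b_n : n ≥ 1 }` and `c_n = ((p^n−1)/p^n)·c`, one
has `a_n ≥ c_n` and `b_n ≥ c_n` for all `n ∈ ℤ`; there are maximal indices `l, m` with
`a_l = c_l` and `b_m = c_m`; and `l, m ≥ 0` with `l + m > 0`. -/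
theorem exists_min_and_maximal_indices (p : ℕ) [Fact p.Prime] (a b : ℤ → WithTop ℚ)
    (hvala : ∀ n : ℤ, a n = ⊤ ∨ ∃ q : ℚ, IsPAdicNN p q ∧ a n = (q : WithTop ℚ))
    (hvalb : ∀ n : ℤ, b n = ⊤ ∨ ∃ q : ℚ, IsPAdicNN p q ∧ b n = (q : WithTop ℚ))
    (h0a : ∀ n : ℤ, n ≤ 0 → a n = 0) (h0b : ∀ n : ℤ, n ≤ 0 → b n = 0)
    (h1a : 0 < a 1 ∧ a 1 < ⊤) (h1b : 0 < b 1 ∧ b 1 < ⊤)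
    (htopa : ∀ B : ℚ, ∃ N : ℤ, ∀ n ≥ N, (B : WithTop ℚ) < a n)
    (htopb : ∀ B : ℚ, ∃ N : ℤ, ∀ n ≥ N, (B : WithTop ℚ) < b n) :
    ∃ c : ℚ,
      IsLeast {x : ℚ | ∃ n : ℕ, 1 ≤ n ∧
        ((((p : ℚ) ^ n / ((p : ℚ) ^ n - 1) : ℚ) : WithTop ℚ) * a n = (x : WithTop ℚ) ∨
          (((p : ℚ) ^ n / ((p : ℚ) ^ n - 1) : ℚ) : WithTop ℚ) * b n = (x : WithTop ℚ))} c ∧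
      (∀ n : ℤ, ((((p : ℚ) ^ n - 1) / (p : ℚ) ^ n * c : ℚ) : WithTop ℚ) ≤ a n ∧
        ((((p : ℚ) ^ n - 1) / (p : ℚ) ^ n * c : ℚ) : WithTop ℚ) ≤ b n) ∧
      ∃ l m : ℤ, 0 ≤ l ∧ 0 ≤ m ∧ 0 < l + m ∧
        a l = ((((p : ℚ) ^ l - 1) / (p : ℚ) ^ l * c : ℚ) : WithTop ℚ) ∧
        (∀ n : ℤ, l < n → a n ≠ ((((p : ℚ) ^ n - 1) / (p : ℚ) ^ n * c : ℚ) : WithTop ℚ)) ∧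
        b m = ((((p : ℚ) ^ m - 1) / (p : ℚ) ^ m * c : ℚ) : WithTop ℚ) ∧
        (∀ n : ℤ, m < n → b n ≠ ((((p : ℚ) ^ n - 1) / (p : ℚ) ^ n * c : ℚ) : WithTop ℚ)) := by
  classical
  have hp : p.Prime := Fact.out
  have hpQ : (1:ℚ) < (p:ℚ) := by exact_mod_cast hp.one_lt
  have hpQ0 : (0:ℚ) < (p:ℚ) := lt_trans one_pos hpQ
  have hsub : ∀ n : ℕ, 1 ≤ n → 0 < (p:ℚ)^n - 1 := by
    intro n hn
    have : (1:ℚ) < (p:ℚ)^n := one_lt_pow₀ hpQ (by omega)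
    linarith
  have hfpos : ∀ n : ℕ, 1 ≤ n → 0 < (p:ℚ)^n / ((p:ℚ)^n - 1) := by
    intro n hn; exact div_pos (pow_pos hpQ0 n) (hsub n hn)
  have hnn_a : ∀ (n : ℤ) (q : ℚ), a n = (q:WithTop ℚ) → 0 ≤ q := by
    intro n q hq
    rcases hvala n with h | ⟨q', hq', h⟩
    · rw [h] at hq; exact absurd hq.symm WithTop.coe_ne_top
    · rw [h] at hq
      have hqq : q' = q := by exact_mod_cast hq
      exact hqq ▸ hq'.1
  have hnn_b : ∀ (n : ℤ) (q : ℚ), b n = (q:WithTop ℚ) → 0 ≤ q := by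
    intro n q hq
    rcases hvalb n with h | ⟨q', hq', h⟩
    · rw [h] at hq; exact absurd hq.symm WithTop.coe_ne_top
    · rw [h] at hq
      have hqq : q' = q := by exact_mod_cast hq
      exact hqq ▸ hq'.1
  set S : Set ℚ := {x : ℚ | ∃ n : ℕ, 1 ≤ n ∧
        ((((p : ℚ) ^ n / ((p : ℚ) ^ n - 1) : ℚ) : WithTop ℚ) * a n = (x : WithTop ℚ) ∨
          (((p : ℚ) ^ n / ((p : ℚ) ^ n - 1) : ℚ) : WithTop ℚ) * b n = (x : WithTop ℚ))}
    with hSdef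
  -- decomposition of members of S
  have hSelim : ∀ x ∈ S, ∃ n : ℕ, 1 ≤ n ∧ ∃ q : ℚ, 0 ≤ q ∧
      x = (p:ℚ)^n / ((p:ℚ)^n - 1) * q ∧
      (a n = (q:WithTop ℚ) ∨ b n = (q:WithTop ℚ)) := by
    rintro x ⟨n, hn, h | h⟩
    · obtain ⟨q, hq, hx⟩ := coe_mul_eq_coe' _ _ _ (ne_of_gt (hfpos n hn)) h
      exact ⟨n, hn, q, hnn_a _ _ hq, hx, Or.inl hq⟩
    · obtain ⟨q, hq, hx⟩ := coe_mul_eq_coe' _ _ _ (ne_of_gt (hfpos n hn)) h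
      exact ⟨n, hn, q, hnn_b _ _ hq, hx, Or.inr hq⟩
  -- members of S dominate their q
  have hxq : ∀ n : ℕ, 1 ≤ n → ∀ q : ℚ, 0 ≤ q → q ≤ (p:ℚ)^n/((p:ℚ)^n-1) * q := by
    intro n hn q hq
    nth_rewrite 1 [← one_mul q]
    refine mul_le_mul_of_nonneg_right ?_ hq
    rw [le_div_iff₀ (hsub n hn)]; linarith
  -- an explicit element of S
  obtain ⟨q1, hq1p, hq1⟩ : ∃ q : ℚ, IsPAdicNN p q ∧ a 1 = (q : WithTop ℚ) :=
    (hvala 1).resolve_left (fun h => absurd (h ▸ h1a.2) (lt_irrefl _))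
  set x₀ : ℚ := (p:ℚ)^(1:ℕ)/((p:ℚ)^(1:ℕ)-1) * q1 with hx₀def
  have hx0 : x₀ ∈ S := by
    refine ⟨1, le_refl 1, Or.inl ?_⟩
    rw [show ((1:ℕ):ℤ) = 1 from rfl, hq1, ← WithTop.coe_mul]
  -- bounds beyond which all values of S exceed x₀
  obtain ⟨Na, hNa⟩ := htopa x₀
  obtain ⟨Nb, hNb⟩ := htopb x₀
  set N : ℤ := max Na Nb with hNdef
  have hkey : ∀ x ∈ S, x ≤ x₀ → ∃ n : ℕ, n < N.toNat ∧
      (x = (p:ℚ)^n/((p:ℚ)^n-1) * ((a n).untopD 0) ∨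
        x = (p:ℚ)^n/((p:ℚ)^n-1) * ((b n).untopD 0)) := by
    rintro x ⟨n, hn, hcase⟩ hle
    rcases hcase with h | h
    · obtain ⟨q, hq, hx⟩ := coe_mul_eq_coe' _ _ _ (ne_of_gt (hfpos n hn)) h
      have hqx : q ≤ x := hx ▸ hxq n hn q (hnn_a _ _ hq)
      have hnN : (n:ℤ) < N := by
        by_contra hcon
        push_neg at hcon
        have h2 := hNa n (le_trans (le_max_left _ _) hcon)
        rw [hq] at h2
        have h3 : x₀ < q := by exact_mod_cast h2
        linarith
      exact ⟨n, Int.lt_toNat.mpr hnN, Or.inl (by rw [hq, WithTop.untopD_coe]; exact hx)⟩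
    · obtain ⟨q, hq, hx⟩ := coe_mul_eq_coe' _ _ _ (ne_of_gt (hfpos n hn)) h
      have hqx : q ≤ x := hx ▸ hxq n hn q (hnn_b _ _ hq)
      have hnN : (n:ℤ) < N := by
        by_contra hcon
        push_neg at hcon
        have h2 := hNb n (le_trans (le_max_right _ _) hcon)
        rw [hq] at h2
        have h3 : x₀ < q := by exact_mod_cast h2
        linarith
      exact ⟨n, Int.lt_toNat.mpr hnN, Or.inr (by rw [hq, WithTop.untopD_coe]; exact hx)⟩
  -- finiteness of the truncated set
  have hfin : {x | x ∈ S ∧ x ≤ x₀}.Finite := by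
    apply Set.Finite.subset
      (((Set.finite_Iio N.toNat).image (fun n : ℕ => (p:ℚ)^n/((p:ℚ)^n-1) * ((a n).untopD 0))).union
        ((Set.finite_Iio N.toNat).image (fun n : ℕ => (p:ℚ)^n/((p:ℚ)^n-1) * ((b n).untopD 0))))
    rintro x ⟨hxS, hxle⟩
    obtain ⟨n, hn, h | h⟩ := hkey x hxS hxle
    · exact Or.inl ⟨n, hn, h.symm⟩
    · exact Or.inr ⟨n, hn, h.symm⟩
  have hne : {x | x ∈ S ∧ x ≤ x₀}.Nonempty := ⟨x₀, hx0, le_refl _⟩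
  obtain ⟨c, hcmem, hcmin⟩ := Set.exists_min_image _ id hfin hne
  obtain ⟨hcS, hcle⟩ := hcmem
  -- c is a lower bound of all of S
  have hlb : ∀ y ∈ S, c ≤ y := by
    intro y hy
    by_cases h : y ≤ x₀
    · exact hcmin y ⟨hy, h⟩
    · push_neg at h
      exact le_trans hcle h.le
  have hc0 : 0 ≤ c := by
    obtain ⟨n, hn, q, hq0, hcq, _⟩ := hSelim c hcS
    rw [hcq]
    exact mul_nonneg (hfpos n hn).le hq0
  have hratio_le_one : ∀ n : ℤ, ((p:ℚ)^n - 1)/(p:ℚ)^n ≤ 1 := by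
    intro n
    rw [div_le_one (zpow_pos hpQ0 n)]
    linarith
  have hcn_le_c : ∀ n : ℤ, ((p:ℚ)^n - 1)/(p:ℚ)^n * c ≤ c := fun n =>
    mul_le_of_le_one_left hc0 (hratio_le_one n)
  -- part 2 : the uniform lower bound
  have hmain : ∀ f : ℤ → WithTop ℚ, (∀ (n : ℤ) (q : ℚ), f n = (q:WithTop ℚ) → 0 ≤ q) →
      (∀ n : ℤ, n ≤ 0 → f n = 0) →
      (∀ (n : ℕ) (q : ℚ), 1 ≤ n → f n = (q:WithTop ℚ) → ((p:ℚ)^n/((p:ℚ)^n-1) * q) ∈ S) →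
      ∀ n : ℤ, ((((p : ℚ) ^ n - 1) / (p : ℚ) ^ n * c : ℚ) : WithTop ℚ) ≤ f n := by
    intro f hfnn hf0 hfS n
    rcases le_or_gt n 0 with hn | hn
    · rw [hf0 n hn]
      have h1 : (p:ℚ)^n ≤ 1 := zpow_le_one_of_nonpos₀ hpQ.le hn
      have h2 : ((p:ℚ)^n - 1)/(p:ℚ)^n * c ≤ 0 :=
        mul_nonpos_of_nonpos_of_nonneg
          (div_nonpos_of_nonpos_of_nonneg (by linarith) (zpow_pos hpQ0 n).le) hc0
      exact_mod_cast h2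
    · lift n to ℕ using hn.le with k hk
      have hk1 : 1 ≤ k := by exact_mod_cast hn
      rcases eq_or_ne (f k) ⊤ with htop | hnet
      · rw [htop]; exact le_top
      · obtain ⟨q, hq⟩ := WithTop.ne_top_iff_exists.mp hnet
        have hq0 := hfnn _ _ hq.symm
        have hcle' : c ≤ (p:ℚ)^k/((p:ℚ)^k-1) * q := hlb _ (hfS k q hk1 hq.symm)
        rw [← hq]
        have hkk : (p:ℚ)^((k:ℤ)) = (p:ℚ)^k := zpow_natCast _ _
        rw [show ((p:ℚ)^((k:ℤ)) - 1)/(p:ℚ)^((k:ℤ)) * c = ((p:ℚ)^k - 1)/(p:ℚ)^k * c by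
          rw [hkk]]
        refine WithTop.coe_le_coe.mpr ?_
        have hd0 : ((p:ℚ)^k - 1) ≠ 0 := (hsub k hk1).ne'
        have hd1 : ((p:ℚ)^k) ≠ 0 := (pow_pos hpQ0 k).ne'
        have hratio0 : 0 ≤ ((p:ℚ)^k - 1)/(p:ℚ)^k :=
          div_nonneg (hsub k hk1).le (pow_pos hpQ0 k).le
        calc ((p:ℚ)^k - 1)/(p:ℚ)^k * c
            ≤ ((p:ℚ)^k - 1)/(p:ℚ)^k * ((p:ℚ)^k/((p:ℚ)^k-1) * q) :=
              mul_le_mul_of_nonneg_left hcle' hratio0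
          _ = q := by field_simp
  -- part 3 : maximal indices
  have hmax : ∀ f : ℤ → WithTop ℚ, (∀ n : ℤ, n ≤ 0 → f n = 0) →
      (∀ B : ℚ, ∃ N : ℤ, ∀ n ≥ N, (B : WithTop ℚ) < f n) →
      ∃ l : ℤ, 0 ≤ l ∧ f l = ((((p:ℚ)^l - 1)/(p:ℚ)^l * c : ℚ) : WithTop ℚ) ∧
        ∀ n : ℤ, l < n → f n ≠ ((((p:ℚ)^n - 1)/(p:ℚ)^n * c : ℚ) : WithTop ℚ) := by
    intro f hf0 hftop
    obtain ⟨M, hM⟩ := hftop c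
    have hbdd : ∀ z : ℤ, f z = ((((p:ℚ)^z - 1)/(p:ℚ)^z * c : ℚ) : WithTop ℚ) → z ≤ M := by
      intro z hz
      by_contra hcon
      push_neg at hcon
      have h1 := hM z hcon.le
      rw [hz] at h1
      have h2 : c < ((p:ℚ)^z - 1)/(p:ℚ)^z * c := by exact_mod_cast h1
      linarith [hcn_le_c z]
    have hinh : f 0 = ((((p:ℚ)^(0:ℤ) - 1)/(p:ℚ)^(0:ℤ) * c : ℚ) : WithTop ℚ) := by
      rw [hf0 0 le_rfl]
      norm_num
    obtain ⟨l, hl, hlub⟩ :=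
      Int.exists_greatest_of_bdd (P := fun z => f z = ((((p:ℚ)^z - 1)/(p:ℚ)^z * c : ℚ) : WithTop ℚ))
        ⟨M, hbdd⟩ ⟨0, hinh⟩
    exact ⟨l, hlub 0 hinh, hl, fun n hn hcontra => absurd (hlub n hcontra) (by omega)⟩
  obtain ⟨l, hl0, hla, hlmax⟩ := hmax a h0a htopa
  obtain ⟨m, hm0, hmb, hmmax⟩ := hmax b h0b htopb
  -- l + m > 0
  have hlm : 0 < l + m := by
    obtain ⟨n, hn, q, hq0, hcq, hab⟩ := hSelim c hcS
    have hd0 : ((p:ℚ)^n - 1) ≠ 0 := (hsub n hn).ne'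
    have hd1 : ((p:ℚ)^n) ≠ 0 := (pow_pos hpQ0 n).ne'
    have hqcn : q = ((p:ℚ)^((n:ℤ)) - 1)/(p:ℚ)^((n:ℤ)) * c := by
      rw [zpow_natCast, hcq]
      field_simp
    rcases hab with h | h
    · have hle : (n:ℤ) ≤ l := by
        by_contra hcon
        push_neg at hcon
        exact hlmax n hcon (by rw [h, hqcn])
      have : 1 ≤ (n:ℤ) := by exact_mod_cast hn
      linarith
    · have hle : (n:ℤ) ≤ m := by
        by_contra hcon
        push_neg at hcon
        exact hmmax n hcon (by rw [h, hqcn])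
      have : 1 ≤ (n:ℤ) := by exact_mod_cast hn
      linarith
  refine ⟨c, ⟨hcS, hlb⟩, fun n => ⟨?_, ?_⟩, l, m, hl0, hm0, hlm, hla, hlmax, hmb, hmmax⟩
  · refine hmain a hnn_a h0a (fun n q hn hq => ⟨n, hn, Or.inl ?_⟩) n
    rw [hq, ← WithTop.coe_mul]
  · refine hmain b hnn_b h0b (fun n q hn hq => ⟨n, hn, Or.inr ?_⟩) n
    rw [hq, ← WithTop.coe_mul]
end
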